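/- Fix an integer n ≥ 100 and set ν = 1/n. Identify the closed arc I = [−ν, 1+ν] of S¹ = ℝ/2ℤ with the corresponding real interval. Let G(ω,x) = (σω, g_ω(x)) be a skew product over the Bernoulli shift whose fiber maps g_ω are orientation-preserving homeomorphisms of S¹ satisfying, for every ω ∈ Σ²: g_ω(I) ⊆ I; if ω₀ = 1 then g_ω(−ν) > 3/4; and if ω₀ = 0 then g_ω is differentiable on I with derivative everywhere in the interval [1−ν, 1). Then for every integer k > n, every ω ∈ Σ², and every x ∈ I: if π(G^k(ω,x)) lies in the open arc (0, 1/4), then ω_{k−n} = ω_{k−n+1} = ⋯ = ω_{k−1} = 0. -/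

import Mathlib

open MeasureTheory Set Filter Topology

instance : Fact ((0 : ℝ) < 2) := ⟨by norm_num⟩

/-- The circle `S¹ = ℝ/2ℤ`. -/
abbrev S1 := AddCircle (2 : ℝ)

/-- The space `Σ² = {0,1}^ℤ` of bi-infinite binary sequences (`false` = 0, `true` = 1). -/
abbrev Sig2 := ℤ → Bool

/-- The Bernoulli shift `(σω)_k = ω_{k+1}`. -/
def shift (ω : Sig2) : Sig2 := fun k => ω (k + 1)

/-- The skew product `G(ω,x) = (σω, g_ω(x))` over the Bernoulli shift. -/
def skew (g : Sig2 → S1 ≃ₜ S1) (p : Sig2 × S1) : Sig2 × S1 :=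
  (shift p.1, g p.1 p.2)

/-- A circle map is orientation preserving if it admits a strictly monotone lift
commuting with the deck translation `x ↦ x + 2`. -/
def OrientPreserving (f : S1 → S1) : Prop :=
  ∃ G : ℝ → ℝ, StrictMono G ∧ (∀ x, G (x + 2) = G x + 2) ∧
    ∀ x : ℝ, ((G x : ℝ) : S1) = f ((x : ℝ) : S1)

private lemma shift_iter (j : ℕ) (ω : Sig2) (m : ℤ) : (shift^[j] ω) m = ω (m + j) := by
  induction j generalizing m with
  | zero => simp
  | succ j ih =>
    rw [Function.iterate_succ_apply']
    show (shift^[j] ω) (m + 1) = ω (m + (j + 1 : ℕ))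
    rw [ih]
    congr 1
    push_cast
    ring

private lemma s1_eq_iff {a b : ℝ} : ((a : ℝ) : S1) = ((b : ℝ) : S1) ↔ ∃ m : ℤ, a - b = 2 * m := by
  rw [← sub_eq_zero, ← AddCircle.coe_sub, AddCircle.coe_eq_zero_iff]
  constructor
  · rintro ⟨m, hm⟩
    refine ⟨m, ?_⟩
    rw [← hm, zsmul_eq_mul]; ring
  · rintro ⟨m, hm⟩
    refine ⟨m, ?_⟩
    rw [zsmul_eq_mul, hm]; ring

private lemma s1_inj {ν a b : ℝ} (hν : 0 < ν) (hν2 : ν ≤ 1 / 100)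
    (ha : a ∈ Icc (-ν) (1 + ν)) (hb : b ∈ Icc (-ν) (1 + ν))
    (h : ((a : ℝ) : S1) = ((b : ℝ) : S1)) : a = b := by
  obtain ⟨m, hm⟩ := s1_eq_iff.mp h
  have hm0 : m = 0 := by
    by_contra h0
    have h1 : (1 : ℝ) ≤ |(m : ℝ)| := by
      have := Int.one_le_abs (show m ≠ 0 by omega)
      exact_mod_cast this
    have h2 : |a - b| ≤ 1 + 2 * ν := by
      rw [abs_le]
      constructor
      · linarith [ha.1, hb.2]
      · linarith [ha.2, hb.1]
    rw [hm, abs_mul, abs_two] at h2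
    linarith
  rw [hm0] at hm
  push_cast at hm
  linarith

private lemma lift_zsmul {G : ℝ → ℝ} (hper : ∀ x, G (x + 2) = G x + 2) :
    ∀ (j : ℤ) (x : ℝ), G (x + 2 * j) = G x + 2 * j := by
  have hnat : ∀ (j : ℕ) (x : ℝ), G (x + 2 * j) = G x + 2 * j := by
    intro j
    induction j with
    | zero => simp
    | succ j ih =>
      intro x
      have h1 : x + 2 * ((j : ℝ) + 1) = (x + 2 * j) + 2 := by ring
      push_cast
      rw [h1, hper, ih]
      ring
  intro j x
  rcases le_or_gt 0 j with h | h
  · lift j to ℕ using h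
    exact_mod_cast hnat j x
  · set jn := (-j).toNat with hjn
    have hj : (jn : ℤ) = -j := Int.toNat_of_nonneg (by omega)
    have h2 := hnat jn (x + 2 * j)
    have h3 : (jn : ℝ) = -(j : ℝ) := by exact_mod_cast hj
    rw [h3] at h2
    have h4 : x + 2 * (j : ℝ) + 2 * (-(j : ℝ)) = x := by ring
    rw [h4] at h2
    linarith

set_option maxHeartbeats 1000000 in
/-- Fix `n ≥ 100`, `ν = 1/n`, and identify the arc `I = [−ν, 1+ν]` of
`S¹ = ℝ/2ℤ` with the real interval. Let `G(ω,x) = (σω, g_ω x)` be a skew product whose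
fiber maps are orientation-preserving homeomorphisms with `g_ω(I) ⊆ I`, such that
`g_ω(−ν) > 3/4` whenever `ω₀ = 1`, and `g_ω` is differentiable on `I` with derivative in
`[1−ν, 1)` whenever `ω₀ = 0`. Then for every `k > n`, every `ω` and every `x ∈ I`:
if `π(G^k(ω,x))` lies in the arc `(0, 1/4)`, then `ω_{k−n} = ⋯ = ω_{k−1} = 0`. -/
theorem stmt_6 (n : ℕ) (hn : 100 ≤ n) (ν : ℝ) (hν : ν = 1 / (n : ℝ))
    (g : Sig2 → S1 ≃ₜ S1)
    (hor : ∀ ω, OrientPreserving (g ω))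
    (hmapsI : ∀ ω, MapsTo (g ω)
      ((fun x : ℝ => ((x : ℝ) : S1)) '' Icc (-ν) (1 + ν))
      ((fun x : ℝ => ((x : ℝ) : S1)) '' Icc (-ν) (1 + ν)))
    (hone : ∀ ω : Sig2, ω 0 = true →
      ∃ t : ℝ, 3 / 4 < t ∧ t ≤ 1 + ν ∧ g ω (((-ν : ℝ) : S1)) = ((t : ℝ) : S1))
    (hzero : ∀ ω : Sig2, ω 0 = false →
      ∃ G : ℝ → ℝ,
        (∀ x ∈ Icc (-ν) (1 + ν), ((G x : ℝ) : S1) = g ω ((x : ℝ) : S1)) ∧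
        (∀ x ∈ Icc (-ν) (1 + ν), G x ∈ Icc (-ν) (1 + ν)) ∧
        (∀ x ∈ Icc (-ν) (1 + ν), ∃ c ∈ Ico (1 - ν) 1,
          HasDerivWithinAt G c (Icc (-ν) (1 + ν)) x)) :
    ∀ k : ℕ, n < k → ∀ ω : Sig2, ∀ x ∈ Icc (-ν) (1 + ν),
      ((skew g)^[k] (ω, ((x : ℝ) : S1))).2 ∈
        (fun t : ℝ => ((t : ℝ) : S1)) '' Ioo 0 (1 / 4) →
      ∀ i : ℕ, k - n ≤ i → i < k → ω (i : ℤ) = false := by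
  have hnR : (100 : ℝ) ≤ (n : ℝ) := by exact_mod_cast hn
  have hνpos : 0 < ν := by rw [hν]; apply div_pos one_pos; linarith
  have hν100 : ν ≤ 1 / 100 := by
    rw [hν]
    apply one_div_le_one_div_of_le (by norm_num) hnR
  -- one-symbol step pushes the point past 3/4
  have hC : ∀ ω' : Sig2, ω' 0 = true → ∀ y ∈ Icc (-ν) (1 + ν), ∀ z ∈ Icc (-ν) (1 + ν),
      ((z : ℝ) : S1) = g ω' ((y : ℝ) : S1) → 3 / 4 < z := by
    intro ω' hω' y hy z hz hzeq
    obtain ⟨t, ht34, ht1, htval⟩ := hone ω' hω'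
    obtain ⟨G, hmono, hper, hlift⟩ := hor ω'
    have h1 : ((G (-ν) : ℝ) : S1) = ((t : ℝ) : S1) := by rw [hlift]; exact htval
    obtain ⟨m, hm⟩ := s1_eq_iff.mp h1
    obtain ⟨G', hmono', hper', hlift', hG'ν⟩ :
        ∃ G' : ℝ → ℝ, StrictMono G' ∧ (∀ u, G' (u + 2) = G' u + 2) ∧
          (∀ u : ℝ, ((G' u : ℝ) : S1) = g ω' ((u : ℝ) : S1)) ∧ G' (-ν) = t := by
      refine ⟨fun u => G u - 2 * m, fun a b hab => sub_lt_sub_right (hmono hab) _, ?_, ?_, ?_⟩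
      · intro u
        simp only [hper u]
        ring
      · intro u
        have h2 : ((G u - 2 * m : ℝ) : S1) = ((G u : ℝ) : S1) := by
          apply s1_eq_iff.mpr
          refine ⟨-m, ?_⟩
          push_cast
          ring
        simp only [h2, hlift]
      · simp only
        linarith
    have hzsmul := lift_zsmul hper'
    have hsurj : ∀ u : ℝ, ∃ v : ℝ, G' v = u := by
      intro u
      obtain ⟨v₀, hv₀⟩ := QuotientAddGroup.mk_surjective ((g ω').symm ((u : ℝ) : S1))
      have h2 : g ω' ((v₀ : ℝ) : S1) = ((u : ℝ) : S1) := by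
        rw [show ((v₀ : ℝ) : S1) = (g ω').symm ((u : ℝ) : S1) from hv₀]
        exact (g ω').apply_symm_apply _
      have h3 : ((G' v₀ : ℝ) : S1) = ((u : ℝ) : S1) := by rw [hlift', h2]
      obtain ⟨j, hj⟩ := s1_eq_iff.mp h3
      refine ⟨v₀ + 2 * (-j : ℤ), ?_⟩
      rw [hzsmul]
      push_cast
      linarith
    have hbound : ∀ w ∈ Icc (-ν) (1 + ν), G' w ≤ 1 + ν := by
      intro w hw
      by_contra hgt
      push_neg at hgt
      obtain ⟨u, hu1, hu2, hu3⟩ : ∃ u : ℝ, 1 + ν < u ∧ u < G' w ∧ u < 2 - ν := by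
        have hmin : 1 + ν < min (G' w) (2 - ν) := lt_min hgt (by linarith)
        have hl1 := min_le_left (G' w) (2 - ν)
        have hl2 := min_le_right (G' w) (2 - ν)
        exact ⟨(1 + ν + min (G' w) (2 - ν)) / 2, by linarith, by linarith, by linarith⟩
      obtain ⟨v, hv⟩ := hsurj u
      have hv1 : -ν < v := by
        have : G' (-ν) < G' v := by rw [hG'ν, hv]; linarith
        exact (hmono'.lt_iff_lt).mp this
      have hv2 : v < w := by
        have : G' v < G' w := by rw [hv]; exact hu2
        exact (hmono'.lt_iff_lt).mp this
      have hvI : v ∈ Icc (-ν) (1 + ν) := ⟨le_of_lt hv1, le_trans (le_of_lt hv2) hw.2⟩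
      obtain ⟨z', hz'I, hz'eq0⟩ := hmapsI ω' ⟨v, hvI, rfl⟩
      have hz'eq : ((z' : ℝ) : S1) = g ω' ((v : ℝ) : S1) := hz'eq0
      have h4 : ((z' : ℝ) : S1) = ((u : ℝ) : S1) := by
        rw [hz'eq, ← hlift', hv]
      obtain ⟨j, hj⟩ := s1_eq_iff.mp h4
      have hj1 : (-2 : ℝ) < 2 * j := by rw [← hj]; linarith [hz'I.1]
      have hj2 : (2 : ℝ) * j < 0 := by rw [← hj]; linarith [hz'I.2]
      have hj3 : (-1 : ℝ) < (j : ℝ) := by linarith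
      have hj4 : (j : ℝ) < 0 := by linarith
      have hj5 : (-1 : ℤ) < j := by exact_mod_cast hj3
      have hj6 : j < 0 := by exact_mod_cast hj4
      omega
    have hGy : t ≤ G' y := by
      rw [← hG'ν]
      exact hmono'.le_iff_le.mpr hy.1
    have hGyI : G' y ∈ Icc (-ν) (1 + ν) := ⟨by linarith, hbound y hy⟩
    have h5 : ((z : ℝ) : S1) = ((G' y : ℝ) : S1) := by rw [hzeq, ← hlift']
    have h6 := s1_inj hνpos hν100 hz hGyI h5
    linarith
  -- zero-symbol step contracts mildly
  have hD : ∀ ω' : Sig2, ω' 0 = false → ∀ y ∈ Icc (-ν) (1 + ν), ∀ z ∈ Icc (-ν) (1 + ν),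
      ((z : ℝ) : S1) = g ω' ((y : ℝ) : S1) → (1 - ν) * (y + ν) ≤ z + ν := by
    intro ω' hω' y hy z hz hzeq
    obtain ⟨G, hl, hmaps, hderiv⟩ := hzero ω' hω'
    have hνI : -ν ∈ Icc (-ν) (1 + ν) := ⟨le_refl _, by linarith⟩
    have hzG : z = G y := by
      apply s1_inj hνpos hν100 hz (hmaps y hy)
      rw [hzeq, ← hl y hy]
    have hcont : ContinuousOn G (Icc (-ν) (1 + ν)) := by
      intro u hu
      obtain ⟨c, _, hd⟩ := hderiv u hu
      exact hd.continuousWithinAt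
    have hdiff : DifferentiableOn ℝ G (interior (Icc (-ν) (1 + ν))) := by
      intro u hu
      rw [interior_Icc] at hu
      obtain ⟨c, _, hd⟩ := hderiv u (Ioo_subset_Icc_self hu)
      exact ((hd.hasDerivAt (Icc_mem_nhds hu.1 hu.2)).differentiableAt).differentiableWithinAt
    have hge : ∀ u ∈ interior (Icc (-ν) (1 + ν)), 1 - ν ≤ deriv G u := by
      intro u hu
      rw [interior_Icc] at hu
      obtain ⟨c, hc, hd⟩ := hderiv u (Ioo_subset_Icc_self hu)
      have := (hd.hasDerivAt (Icc_mem_nhds hu.1 hu.2)).deriv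
      rw [this]
      exact hc.1
    have key := (convex_Icc (-ν) (1 + ν)).mul_sub_le_image_sub_of_le_deriv hcont hdiff hge
      (-ν) hνI y hy hy.1
    have hGν : -ν ≤ G (-ν) := (hmaps (-ν) hνI).1
    rw [hzG]
    have : y - -ν = y + ν := by ring
    rw [this] at key
    linarith
  -- one step stays in I
  have hstep : ∀ ω' : Sig2, ∀ y ∈ Icc (-ν) (1 + ν),
      ∃ z ∈ Icc (-ν) (1 + ν), ((z : ℝ) : S1) = g ω' ((y : ℝ) : S1) := by
    intro ω' y hy
    obtain ⟨z, hzI, hzeq⟩ := hmapsI ω' ⟨y, hy, rfl⟩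
    exact ⟨z, hzI, hzeq⟩
  -- trajectory stays in I
  have htraj : ∀ (j : ℕ) (ω' : Sig2), ∀ y ∈ Icc (-ν) (1 + ν),
      ∃ z ∈ Icc (-ν) (1 + ν),
        (skew g)^[j] (ω', ((y : ℝ) : S1)) = (shift^[j] ω', ((z : ℝ) : S1)) := by
    intro j
    induction j with
    | zero => intro ω' y hy; exact ⟨y, hy, rfl⟩
    | succ j ih =>
      intro ω' y hy
      obtain ⟨z, hzI, hzeq⟩ := ih ω' y hy
      obtain ⟨w, hwI, hweq⟩ := hstep (shift^[j] ω') z hzI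
      refine ⟨w, hwI, ?_⟩
      rw [Function.iterate_succ_apply', hzeq, Function.iterate_succ_apply' shift, hweq]
      rfl
  intro k hk ω x hx hfin i hi1 hi2
  by_contra hcon
  have hωi : ω (i : ℤ) = true := by
    cases h : ω (i : ℤ) with
    | false => exact absurd h hcon
    | true => rfl
  -- main estimate by induction
  have hkey : ∀ j : ℕ, ∃ z ∈ Icc (-ν) (1 + ν),
      (skew g)^[i + 1 + j] (ω, ((x : ℝ) : S1)) = (shift^[i + 1 + j] ω, ((z : ℝ) : S1)) ∧
      (1 - ν) ^ j * (3 / 4 + ν) ≤ z + ν := by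
    intro j
    induction j with
    | zero =>
      obtain ⟨y, hyI, hyeq⟩ := htraj i ω x hx
      obtain ⟨z, hzI, hzeq⟩ := hstep (shift^[i] ω) y hyI
      have hsym : (shift^[i] ω) 0 = true := by
        rw [shift_iter]
        simpa using hωi
      have h34 := hC _ hsym y hyI z hzI hzeq
      refine ⟨z, hzI, ?_, by rw [pow_zero, one_mul]; linarith⟩
      rw [show i + 1 + 0 = i + 1 from rfl, Function.iterate_succ_apply', hyeq,
        Function.iterate_succ_apply' shift, hzeq]
      rfl
    | succ j ih =>
      obtain ⟨z, hzI, hzeq, hest⟩ := ih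
      obtain ⟨w, hwI, hweq⟩ := hstep (shift^[i + 1 + j] ω) z hzI
      have hidx : i + 1 + (j + 1) = (i + 1 + j) + 1 := by ring
      have hiter : (skew g)^[i + 1 + (j + 1)] (ω, ((x : ℝ) : S1)) =
          (shift^[i + 1 + (j + 1)] ω, ((w : ℝ) : S1)) := by
        rw [hidx, Function.iterate_succ_apply', hzeq, Function.iterate_succ_apply' shift, hweq]
        rfl
      refine ⟨w, hwI, hiter, ?_⟩
      rcases Bool.eq_false_or_eq_true ((shift^[i + 1 + j] ω) 0) with hb | hb
      · -- symbol 1: reset above 3/4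
        have h34 := hC _ hb z hzI w hwI hweq
        have hpow : (1 - ν) ^ (j + 1) ≤ 1 :=
          pow_le_one₀ (by linarith) (by linarith)
        nlinarith
      · -- symbol 0: mild contraction
        have hcontr := hD _ hb z hzI w hwI hweq
        have h0 : (0 : ℝ) ≤ 1 - ν := by linarith
        calc (1 - ν) ^ (j + 1) * (3 / 4 + ν) = (1 - ν) * ((1 - ν) ^ j * (3 / 4 + ν)) := by ring
          _ ≤ (1 - ν) * (z + ν) := mul_le_mul_of_nonneg_left hest h0
          _ ≤ w + ν := hcontr
  set j := k - (i + 1) with hjdef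
  have hij : i + 1 + j = k := by omega
  obtain ⟨z, hzI, hzeq, hest⟩ := hkey j
  rw [hij] at hzeq
  obtain ⟨w, hwmem, hweq0⟩ := hfin
  have hweq : ((w : ℝ) : S1) = ((skew g)^[k] (ω, ((x : ℝ) : S1))).2 := hweq0
  have hwI : w ∈ Icc (-ν) (1 + ν) :=
    ⟨by linarith [hwmem.1], by linarith [hwmem.2]⟩
  have hwz : w = z := by
    apply s1_inj hνpos hν100 hwI hzI
    rw [hweq, hzeq]
  have hz14 : z < 1 / 4 := hwz ▸ hwmem.2
  have hjn : j ≤ n - 1 := by omega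
  have hpow : (1 - ν) ^ (n - 1) ≤ (1 - ν) ^ j :=
    pow_le_pow_of_le_one (by linarith) (by linarith) hjn
  -- numeric bound : (1-ν)^(n-1) ≥ 1/e
  have hm : ((n - 1 : ℕ) : ℝ) = (n : ℝ) - 1 := by
    have : 1 ≤ n := by omega
    push_cast [Nat.cast_sub this]
    ring
  have hn1 : (0 : ℝ) < (n : ℝ) - 1 := by linarith
  have ha : 1 - ν = ((n : ℝ) - 1) / n := by
    rw [hν]; field_simp
  have hb : (1 - ν) * (1 + 1 / ((n : ℝ) - 1)) = 1 := by
    rw [ha]; field_simp; ring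
  have h1 : (1 + 1 / ((n : ℝ) - 1)) ^ (n - 1) ≤ Real.exp 1 := by
    have h2 : 1 + 1 / ((n : ℝ) - 1) ≤ Real.exp (1 / ((n : ℝ) - 1)) := by
      have := Real.add_one_le_exp (1 / ((n : ℝ) - 1))
      linarith
    calc (1 + 1 / ((n : ℝ) - 1)) ^ (n - 1)
        ≤ (Real.exp (1 / ((n : ℝ) - 1))) ^ (n - 1) :=
          pow_le_pow_left₀ (by positivity) h2 _
      _ = Real.exp (((n - 1 : ℕ) : ℝ) * (1 / ((n : ℝ) - 1))) := (Real.exp_nat_mul _ _).symm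
      _ = Real.exp 1 := by
          rw [hm]
          congr 1
          field_simp
  have hA0 : (0 : ℝ) ≤ (1 - ν) ^ (n - 1) := pow_nonneg (by linarith) _
  have h3 : (1 - ν) ^ (n - 1) * (1 + 1 / ((n : ℝ) - 1)) ^ (n - 1) = 1 := by
    rw [← mul_pow, hb, one_pow]
  have hA1 : 1 ≤ Real.exp 1 * (1 - ν) ^ (n - 1) := by
    nlinarith [mul_nonneg hA0 (sub_nonneg.mpr h1)]
  have he : Real.exp 1 < 2.7182818286 := Real.exp_one_lt_d9
  have hA : (0.3678 : ℝ) ≤ (1 - ν) ^ (n - 1) := by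
    nlinarith [Real.exp_pos 1]
  have hj0 : (0.3678 : ℝ) ≤ (1 - ν) ^ j := le_trans hA hpow
  have hfinal := mul_le_mul_of_nonneg_right hj0 (by linarith : (0 : ℝ) ≤ 3 / 4 + ν)
  nlinarith
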